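/- arXiv:2410.17641 — 4 statements merged into one kernel-verified Lean document; each statement's English description precedes it below -/
import Mathlib

section
/- If G' is obtained from a hedge graph G by contracting a hedge, then every hedge k-cut-set of G' is also a hedge k-cut-set of G. -/
/-- A hedge graph: a vertex set `V` and a family of hedges indexed by `E`,
each hedge being a collection of components (subsets of `V`). -/
structure HedgeGraph (V : Type*) (E : Type*) where
  comp : E → Finset (Finset V)

namespace HedgeGraph

variable {V E : Type*}

/-- A vertex is incident with a hedge if it lies in some component of the hedge. -/
def Incident (G : HedgeGraph V E) (v : V) (e : E) : Prop :=
  ∃ c ∈ G.comp e, v ∈ c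

/-- The degree of a vertex: the number of hedges it is incident to. -/
noncomputable def degree (G : HedgeGraph V E) (v : V) : ℕ :=
  {e | G.Incident v e}.ncard

/-- The size of a hedge: the number of vertices incident with it. -/
noncomputable def hedgeSize (G : HedgeGraph V E) (e : E) : ℕ :=
  {v | G.Incident v e}.ncard

/-- A hedge is cut by a partition `P` of the vertices into `k` parts if some
component of the hedge meets two different parts. -/
def CutsHedge {k : ℕ} (G : HedgeGraph V E) (P : V → Fin k) (e : E) : Prop :=
  ∃ c ∈ G.comp e, ∃ u ∈ c, ∃ w ∈ c, P u ≠ P w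

/-- The hedge `k`-cut-set associated with a `k`-cut `P`. -/
def cutSet {k : ℕ} (G : HedgeGraph V E) (P : V → Fin k) : Set E :=
  {e | G.CutsHedge P e}

/-- `C` is a hedge `k`-cut-set of `G` if it is the cut-set associated with some
partition of `V` into `k` nonempty parts. -/
def IsCutSetOf (G : HedgeGraph V E) (k : ℕ) (C : Set E) : Prop :=
  ∃ P : V → Fin k, Function.Surjective P ∧ C = G.cutSet P

end HedgeGraph

open HedgeGraph in
/-- If `G'` is obtained from a hedge graph `G` by contracting a hedge `e₀`
(via the projection `π` identifying each component of `e₀` to a point), then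
every hedge `k`-cut-set of `G'` is also a hedge `k`-cut-set of `G`. -/
theorem cutSet_of_contraction {V V' E : Type*} [DecidableEq V']
    (G : HedgeGraph V E) (G' : HedgeGraph V' E) (e₀ : E)
    (π : V → V') (hπsurj : Function.Surjective π)
    (hπ : ∀ u v : V, π u = π v ↔ (u = v ∨ ∃ c ∈ G.comp e₀, u ∈ c ∧ v ∈ c))
    (he₀ : G'.comp e₀ = ∅)
    (hcomp : ∀ e : E, e ≠ e₀ → G'.comp e = (G.comp e).image (fun c => c.image π))
    (k : ℕ) (C : Set E) (hC : G'.IsCutSetOf k C) :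
    G.IsCutSetOf k C := by
  obtain ⟨P', hsurj, hCeq⟩ := hC
  refine ⟨P' ∘ π, hsurj.comp hπsurj, ?_⟩
  rw [hCeq]
  ext e
  simp only [HedgeGraph.cutSet, HedgeGraph.CutsHedge, Set.mem_setOf_eq]
  constructor
  · rintro ⟨c', hc', u', hu', w', hw', hne⟩
    by_cases he : e = e₀
    · subst he; rw [he₀] at hc'; exact absurd hc' (Finset.notMem_empty _)
    · rw [hcomp e he] at hc'
      obtain ⟨c, hc, rfl⟩ := Finset.mem_image.mp hc'
      obtain ⟨u, hu, rfl⟩ := Finset.mem_image.mp hu'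
      obtain ⟨w, hw, rfl⟩ := Finset.mem_image.mp hw'
      exact ⟨c, hc, u, hu, w, hw, hne⟩
  · rintro ⟨c, hc, u, hu, w, hw, hne⟩
    by_cases he : e = e₀
    · subst he
      exact absurd (congrArg P' ((hπ u w).mpr (Or.inr ⟨c, hc, hu, hw⟩))) hne
    · refine ⟨c.image π, ?_, π u, Finset.mem_image_of_mem _ hu,
        π w, Finset.mem_image_of_mem _ hw, hne⟩
      rw [hcomp e he]
      exact Finset.mem_image_of_mem _ hc
end

section
/- Every hedge k-cut-set of size ℓ in an n-vertex hedge graph (n ≥ 2) can be specified by a choice of ℓ ordered pairs of distinct vertices: namely, there exist pairs (a_1,b_1),...,(a_ℓ,b_ℓ) such that the cut-set equals exactly the set of hedges having a component containing both a_i and b_i for some i. Consequently, the number of distinct hedge k-cut-sets of size ℓ is at most n^{2ℓ}. -/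
open HedgeGraph in
/-- Every hedge `k`-cut-set of size `ℓ` is specified by `ℓ` ordered pairs of
distinct vertices; consequently there are at most `n ^ (2ℓ)` such cut-sets. -/
theorem cutSet_specified_by_pairs {V E : Type*} [Fintype V] [Fintype E]
    (G : HedgeGraph V E) (n k ℓ : ℕ) (hn : Fintype.card V = n) (h2 : 2 ≤ n) :
    (∀ C : Set E, G.IsCutSetOf k C → C.ncard = ℓ →
      ∃ a b : Fin ℓ → V, (∀ i, a i ≠ b i) ∧
        C = {e | ∃ i, ∃ c ∈ G.comp e, a i ∈ c ∧ b i ∈ c}) ∧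
    {C : Set E | G.IsCutSetOf k C ∧ C.ncard = ℓ}.ncard ≤ n ^ (2 * ℓ) := by
  classical
  have hV : Nonempty V := by
    have : 0 < Fintype.card V := by omega
    exact Fintype.card_pos_iff.mp this
  have main : ∀ C : Set E, G.IsCutSetOf k C → C.ncard = ℓ →
      ∃ a b : Fin ℓ → V, (∀ i, a i ≠ b i) ∧
        C = {e | ∃ i, ∃ c ∈ G.comp e, a i ∈ c ∧ b i ∈ c} := by
    intro C hC hcard
    obtain ⟨P, hPsurj, rfl⟩ := hC
    have hfin : (G.cutSet P).Finite := Set.toFinite _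
    have hcard' : hfin.toFinset.card = ℓ := by
      rw [← hcard, Set.ncard_eq_toFinset_card _ hfin]
    let σ := hfin.toFinset.equivFinOfCardEq hcard'
    have hmem : ∀ i : Fin ℓ, ((σ.symm i : E)) ∈ G.cutSet P := by
      intro i
      have := (σ.symm i).2
      simpa using this
    choose c hc u hu w hw hne using hmem
    refine ⟨u, w, fun i => ?_, ?_⟩
    · intro h; exact hne i (by rw [h])
    · ext e
      constructor
      · intro he
        refine ⟨σ ⟨e, by simpa using he⟩, c (σ ⟨e, by simpa using he⟩), ?_, hu _, hw _⟩
        have h1 := hc (σ ⟨e, by simpa using he⟩)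
        simpa using h1
      · rintro ⟨i, cc, hcc, hac, hbc⟩
        exact ⟨cc, hcc, u i, hac, w i, hbc, hne i⟩
  refine ⟨main, ?_⟩
  set S := {C : Set E | G.IsCutSetOf k C ∧ C.ncard = ℓ} with hS
  have hprop : ∀ C ∈ S, ∃ ab : (Fin ℓ → V) × (Fin ℓ → V),
      C = {e | ∃ i, ∃ c ∈ G.comp e, ab.1 i ∈ c ∧ ab.2 i ∈ c} := by
    intro C hC
    obtain ⟨a, b, _, hEq⟩ := main C hC.1 hC.2
    exact ⟨(a, b), hEq⟩
  let f : Set E → (Fin ℓ → V) × (Fin ℓ → V) := fun C =>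
    if h : ∃ ab : (Fin ℓ → V) × (Fin ℓ → V),
        C = {e | ∃ i, ∃ c ∈ G.comp e, ab.1 i ∈ c ∧ ab.2 i ∈ c}
    then h.choose else Classical.arbitrary _
  have hinj : Set.InjOn f S := by
    intro C1 h1 C2 h2 hEq
    have e1 := hprop C1 h1
    have e2 := hprop C2 h2
    have s1 := e1.choose_spec
    have s2 := e2.choose_spec
    simp only [f, dif_pos e1, dif_pos e2] at hEq
    rw [s1, s2, hEq]
  calc S.ncard = (f '' S).ncard := (Set.ncard_image_of_injOn hinj).symm
    _ ≤ (Set.univ : Set ((Fin ℓ → V) × (Fin ℓ → V))).ncard :=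
        Set.ncard_le_ncard (Set.subset_univ _) (Set.finite_univ)
    _ = Fintype.card ((Fin ℓ → V) × (Fin ℓ → V)) := by
        simp [Set.ncard_univ, Nat.card_eq_fintype_card]
    _ = n ^ (2 * ℓ) := by
        simp [Fintype.card_prod, Fintype.card_fun, hn, ← pow_add, two_mul]
end

section
/- Let G be a simple graph on n ≥ 2k+1 vertices and k ≥ 1. Construct a hedge graph G' with vertex set V(G) ∪ {v_e : e ∈ E(G)}, with a hedge N_x = {{x} ∪ {v_{xy} : y ∈ N_G(x)}} for each x ∈ V(G), and a hedge {{x,y}} for each pair of distinct x, y ∈ V(G). Set ℓ = k and h = C(k,2) + 1. Then G contains a clique of size k if and only if G' admits a hedge h-cut whose cut-set has size at most ℓ. -/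
/-- The hedge graph `G'` of the W[1]-hardness reduction: its vertices are the
vertices of `G` together with a vertex `v_e` for each edge `e` of `G`; for each
`x ∈ V(G)` there is a hedge with the single component `{x} ∪ {v_{xy} : y ∈ N_G(x)}`,
and for each pair `{x, y}` of distinct vertices of `G` there is a hedge with the
single component `{x, y}`. -/
def reductionHedgeGraph {V : Type*} [Fintype V] [DecidableEq V]
    (G : SimpleGraph V) [DecidableRel G.Adj] :
    HedgeGraph (V ⊕ G.edgeSet) (V ⊕ {t : Finset V // t.card = 2}) where
  comp := fun e => match e with
    | Sum.inl x => {insert (Sum.inl x)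
        ((Finset.univ.filter (fun e : G.edgeSet => x ∈ (e : Sym2 V))).image Sum.inr)}
    | Sum.inr t => {t.val.image Sum.inl}


private def pairFinset {V : Type*} [DecidableEq V] : Sym2 V → Finset V :=
  Sym2.lift ⟨fun a b => {a, b}, fun a b => Finset.pair_comm a b⟩

@[simp] private lemma pairFinset_mk {V : Type*} [DecidableEq V] (a b : V) :
    pairFinset s(a, b) = {a, b} := rfl

private lemma mem_pairFinset {V : Type*} [DecidableEq V] {x : V} {s : Sym2 V} :
    x ∈ pairFinset s ↔ x ∈ s := by
  induction s using Sym2.ind with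
  | _ a b => simp [Sym2.mem_iff]

private lemma pairFinset_inj {V : Type*} [DecidableEq V] {s t : Sym2 V}
    (h : pairFinset s = pairFinset t) : s = t := by
  induction s using Sym2.ind with
  | _ a b =>
    induction t using Sym2.ind with
    | _ c d =>
      simp only [pairFinset_mk] at h
      have hc : c ∈ ({a, b} : Finset V) := by rw [h]; simp
      have hd : d ∈ ({a, b} : Finset V) := by rw [h]; simp
      have ha : a ∈ ({c, d} : Finset V) := by rw [← h]; simp
      have hb : b ∈ ({c, d} : Finset V) := by rw [← h]; simp
      simp only [Finset.mem_insert, Finset.mem_singleton] at hc hd ha hb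
      rw [Sym2.eq_iff]
      tauto

private lemma choose_two_lt {m k : ℕ} (h2 : 2 ≤ k) (h : m < k) :
    m.choose 2 < k.choose 2 := by
  obtain ⟨j, rfl⟩ : ∃ j, k = j + 1 := ⟨k - 1, by omega⟩
  have h1 : m.choose 2 ≤ j.choose 2 := Nat.choose_le_choose 2 (by omega)
  have h3 : (j + 1).choose 2 = j.choose 1 + j.choose 2 := Nat.choose_succ_succ j 1
  simp only [Nat.choose_one_right] at h3
  omega

open HedgeGraph in
private theorem forward_aux {V : Type*} [Fintype V] [DecidableEq V]
    (G : SimpleGraph V) [DecidableRel G.Adj] (n k : ℕ)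
    (hn : Fintype.card V = n) (hk : 1 ≤ k) (hnk : 2 * k + 1 ≤ n)
    (s : Finset V) (hs : G.IsNClique k s) :
      ∃ C : Set (V ⊕ {t : Finset V // t.card = 2}),
        (reductionHedgeGraph G).IsCutSetOf (k.choose 2 + 1) C ∧ C.ncard ≤ k := by
  classical
  have hcard : Fintype.card {t // t ∈ s.powersetCard 2} = k.choose 2 := by
    rw [Fintype.card_coe, Finset.card_powersetCard, hs.2]
  let g : {t // t ∈ s.powersetCard 2} ≃ Fin (k.choose 2) :=
    Fintype.equivFinOfCardEq hcard
  set P : (V ⊕ G.edgeSet) → Fin (k.choose 2 + 1) :=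
    Sum.elim (fun _ => 0)
      (fun e => if h : pairFinset (e : Sym2 V) ∈ s.powersetCard 2 then (g ⟨_, h⟩).succ else 0)
    with hP
  refine ⟨(reductionHedgeGraph G).cutSet P, ⟨P, ?_, rfl⟩, ?_⟩
  · -- surjective
    intro j
    induction j using Fin.cases with
    | zero =>
      have hpos : 0 < Fintype.card V := by omega
      obtain ⟨v⟩ := Fintype.card_pos_iff.mp hpos
      exact ⟨Sum.inl v, rfl⟩
    | succ i =>
      have ht := (g.symm i).prop
      obtain ⟨hsub, ht2⟩ := Finset.mem_powersetCard.mp ht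
      obtain ⟨a, b, hab, hval⟩ := Finset.card_eq_two.mp ht2
      have hadj : G.Adj a b :=
        hs.1 (hsub (hval ▸ by simp)) (hsub (hval ▸ by simp)) hab
      refine ⟨Sum.inr ⟨s(a, b), hadj⟩, ?_⟩
      have hpf : pairFinset (s(a, b) : Sym2 V) = {a, b} := rfl
      have hmem : pairFinset (s(a, b) : Sym2 V) ∈ s.powersetCard 2 := by
        rw [hpf, ← hval]; exact ht
      simp only [hP, Sum.elim_inr]
      rw [dif_pos hmem]
      have : (⟨pairFinset (s(a,b) : Sym2 V), hmem⟩ :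
          {t // t ∈ s.powersetCard 2}) = g.symm i := by
        apply Subtype.ext
        simp [hpf, hval]
      rw [this, Equiv.apply_symm_apply]
  · -- cut set small
    have hsub : (reductionHedgeGraph G).cutSet P ⊆ Sum.inl '' (s : Set V) := by
      rintro (x | t) he
      · obtain ⟨c, hc, u, hu, w, hw, hne⟩ := he
        simp only [reductionHedgeGraph, Finset.mem_singleton] at hc
        subst hc
        have key : ∀ z ∈ insert (Sum.inl x)
            ((Finset.univ.filter (fun e : G.edgeSet => x ∈ (e : Sym2 V))).image Sum.inr),
            P z ≠ 0 → x ∈ s := by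
          intro z hz hz0
          rcases Finset.mem_insert.mp hz with rfl | hz
          · exact absurd rfl hz0
          · obtain ⟨e, he', rfl⟩ := Finset.mem_image.mp hz
            have hxe : x ∈ (e : Sym2 V) := (Finset.mem_filter.mp he').2
            simp only [hP, Sum.elim_inr] at hz0
            by_cases hmem : pairFinset (e : Sym2 V) ∈ s.powersetCard 2
            · have : pairFinset (e : Sym2 V) ⊆ s := (Finset.mem_powersetCard.mp hmem).1
              exact this (mem_pairFinset.mpr hxe)
            · rw [dif_neg hmem] at hz0; exact absurd rfl hz0
        have hx : x ∈ s := by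
          rcases eq_or_ne (P u) 0 with h0 | h0
          · exact key w hw (by rw [← h0]; exact (Ne.symm hne))
          · exact key u hu h0
        exact ⟨x, hx, rfl⟩
      · exfalso
        obtain ⟨c, hc, u, hu, w, hw, hne⟩ := he
        simp only [reductionHedgeGraph, Finset.mem_singleton] at hc
        subst hc
        obtain ⟨a, _, rfl⟩ := Finset.mem_image.mp hu
        obtain ⟨b, _, rfl⟩ := Finset.mem_image.mp hw
        exact hne rfl
    calc ((reductionHedgeGraph G).cutSet P).ncard
        ≤ (Sum.inl '' (s : Set V)).ncard := Set.ncard_le_ncard hsub (Set.toFinite _)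
      _ = (s : Set V).ncard := Set.ncard_image_of_injective _ Sum.inl_injective
      _ = s.card := Set.ncard_coe_finset s
      _ = k := hs.2


open HedgeGraph in
private theorem backward_aux {V : Type*} [Fintype V] [DecidableEq V]
    (G : SimpleGraph V) [DecidableRel G.Adj] (n k : ℕ)
    (hn : Fintype.card V = n) (hk : 1 ≤ k) (hnk : 2 * k + 1 ≤ n)
    (C : Set (V ⊕ {t : Finset V // t.card = 2}))
    (P : (V ⊕ G.edgeSet) → Fin (k.choose 2 + 1))
    (hsurj : Function.Surjective P) (hC : C = (reductionHedgeGraph G).cutSet P)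
    (hcard : C.ncard ≤ k) :
    ∃ s : Finset V, G.IsNClique k s := by
  classical
  have hV : 0 < Fintype.card V := by omega
  obtain ⟨v0⟩ := Fintype.card_pos_iff.mp hV
  -- the finset version of C
  set D : Finset (V ⊕ {t : Finset V // t.card = 2}) := (Set.toFinite C).toFinset with hD
  have hDcard : D.card ≤ k := by
    rw [hD, ← Set.ncard_eq_toFinset_card C (Set.toFinite C)]; exact hcard
  -- handle k = 1 directly
  rcases eq_or_lt_of_le hk with h1 | h2
  · exact ⟨{v0}, by simp [SimpleGraph.isNClique_iff, SimpleGraph.isClique_iff,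
      Set.pairwise_singleton, ← h1]⟩
  -- Step A: all original vertices get the same part
  have hcon : ∀ a b : V, P (Sum.inl a) = P (Sum.inl b) := by
    by_contra hcontra
    push_neg at hcontra
    obtain ⟨a, b, hab⟩ := hcontra
    have hane : a ≠ b := fun h => hab (by rw [h])
    set f : V → Finset V :=
      fun c => if P (Sum.inl c) = P (Sum.inl a) then {b, c} else {a, c} with hf
    set T : Finset {t : Finset V // t.card = 2} :=
      Finset.univ.filter (fun t => Sum.inr t ∈ C) with hT
    have hmaps : ∀ c ∈ Finset.univ \ ({a, b} : Finset V), f c ∈ T.image Subtype.val := by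
      intro c hc
      simp only [Finset.mem_sdiff, Finset.mem_insert, Finset.mem_singleton] at hc
      push_neg at hc
      obtain ⟨-, hca, hcb⟩ := hc
      by_cases hcase : P (Sum.inl c) = P (Sum.inl a)
      · have h2' : ({b, c} : Finset V).card = 2 := Finset.card_pair (Ne.symm hcb)
        have hcut : Sum.inr (⟨{b, c}, h2'⟩ : {t : Finset V // t.card = 2}) ∈ C := by
          rw [hC]
          refine ⟨({b, c} : Finset V).image Sum.inl, by simp [reductionHedgeGraph],
            Sum.inl b, ?_, Sum.inl c, ?_, ?_⟩
          · exact Finset.mem_image_of_mem _ (by simp)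
          · exact Finset.mem_image_of_mem _ (by simp)
          · intro h; exact hab (by rw [h, hcase])
        refine Finset.mem_image.mpr ⟨⟨{b, c}, h2'⟩, Finset.mem_filter.mpr ⟨Finset.mem_univ _, hcut⟩, ?_⟩
        simp [hf, hcase]
      · have h2' : ({a, c} : Finset V).card = 2 := Finset.card_pair (Ne.symm hca)
        have hcut : Sum.inr (⟨{a, c}, h2'⟩ : {t : Finset V // t.card = 2}) ∈ C := by
          rw [hC]
          refine ⟨({a, c} : Finset V).image Sum.inl, by simp [reductionHedgeGraph],
            Sum.inl a, ?_, Sum.inl c, ?_, fun h => hcase h.symm⟩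
          · exact Finset.mem_image_of_mem _ (by simp)
          · exact Finset.mem_image_of_mem _ (by simp)
        refine Finset.mem_image.mpr ⟨⟨{a, c}, h2'⟩, Finset.mem_filter.mpr ⟨Finset.mem_univ _, hcut⟩, ?_⟩
        simp [hf, hcase]
    have hinj : Set.InjOn f ↑(Finset.univ \ ({a, b} : Finset V)) := by
      intro c hc c' hc' hcc
      have hc2 := Finset.mem_sdiff.mp (Finset.mem_coe.mp hc)
      have hc2' := Finset.mem_sdiff.mp (Finset.mem_coe.mp hc')
      simp only [Finset.mem_insert, Finset.mem_singleton] at hc2 hc2'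
      push_neg at hc2 hc2'
      have h1' : c' ∈ f c' := by
        rw [hf]; by_cases h : P (Sum.inl c') = P (Sum.inl a) <;> simp [h]
      rw [← hcc, hf] at h1'
      by_cases h : P (Sum.inl c) = P (Sum.inl a)
      · simp only [h, if_true] at h1'
        rcases Finset.mem_insert.mp h1' with h' | h'
        · exact absurd h' hc2'.2.2
        · exact (Finset.mem_singleton.mp h').symm
      · simp only [h, if_false] at h1'
        rcases Finset.mem_insert.mp h1' with h' | h'
        · exact absurd h' hc2'.2.1
        · exact (Finset.mem_singleton.mp h').symm
    have hcount : (Finset.univ \ ({a, b} : Finset V)).card ≤ (T.image Subtype.val).card :=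
      Finset.card_le_card_of_injOn f hmaps hinj
    have hTcard : (T.image Subtype.val).card = T.card :=
      Finset.card_image_of_injective _ Subtype.val_injective
    have hTD : T.card ≤ D.card := by
      apply Finset.card_le_card_of_injOn Sum.inr
      · intro t ht
        rw [hD, Finset.mem_coe, Set.Finite.mem_toFinset]
        exact (Finset.mem_filter.mp ht).2
      · intro x _ y _ h; exact Sum.inr_injective h
    have hsd : (Finset.univ \ ({a, b} : Finset V)).card = n - 2 := by
      rw [Finset.card_sdiff_of_subset (Finset.subset_univ _), Finset.card_univ, hn,
        Finset.card_pair hane]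
    omega
  set p0 : Fin (k.choose 2 + 1) := P (Sum.inl v0) with hp0
  have hall : ∀ x : V, P (Sum.inl x) = p0 := fun x => hcon x v0
  -- Step C: the set of cut vertex-hedges
  set S : Finset V := Finset.univ.filter (fun x => Sum.inl x ∈ C) with hS
  have hScard : S.card ≤ k := by
    refine le_trans ?_ hDcard
    apply Finset.card_le_card_of_injOn Sum.inl
    · intro x hx
      rw [hD, Finset.mem_coe, Set.Finite.mem_toFinset]
      exact (Finset.mem_filter.mp hx).2
    · intro x _ y _ h; exact Sum.inl_injective h
  -- Step D: endpoints of far edges lie in S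
  have hend : ∀ e : G.edgeSet, P (Sum.inr e) ≠ p0 → ∀ x, x ∈ (e : Sym2 V) → x ∈ S := by
    intro e hne x hx
    rw [hS, Finset.mem_filter]
    refine ⟨Finset.mem_univ _, ?_⟩
    rw [hC]
    refine ⟨insert (Sum.inl x)
        ((Finset.univ.filter (fun e' : G.edgeSet => x ∈ (e' : Sym2 V))).image Sum.inr),
      by simp [reductionHedgeGraph], Sum.inl x, Finset.mem_insert_self _ _,
      Sum.inr e, ?_, ?_⟩
    · exact Finset.mem_insert_of_mem (Finset.mem_image_of_mem _
        (Finset.mem_filter.mpr ⟨Finset.mem_univ _, hx⟩))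
    · rw [hall x]; exact fun h => hne h.symm
  -- Step E: at least C(k,2) edges are outside p0's part
  set E' : Finset G.edgeSet := Finset.univ.filter (fun e => P (Sum.inr e) ≠ p0) with hE'
  have hE'card : k.choose 2 ≤ E'.card := by
    have hgt : 1 < k.choose 2 + 1 := by
      have : 1 ≤ k.choose 2 := Nat.succ_le_of_lt (by
        have := Nat.choose_pos (show 2 ≤ k from h2)
        omega)
      omega
    -- pick some i ≠ p0 to get a default edge
    haveI : Nontrivial (Fin (k.choose 2 + 1)) :=
      Fin.nontrivial_iff_two_le.mpr (by omega)
    obtain ⟨i1, hi1⟩ : ∃ i : Fin (k.choose 2 + 1), i ≠ p0 := exists_ne p0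
    obtain ⟨u1, hu1⟩ := hsurj i1
    obtain ⟨e0, -⟩ : ∃ e : G.edgeSet, True := by
      rcases u1 with x | e
      · exact absurd (hu1.symm.trans (hall x)) hi1
      · exact ⟨e, trivial⟩
    set F : Fin (k.choose 2 + 1) → G.edgeSet :=
      fun i => Sum.elim (fun _ => e0) id (hsurj i).choose with hF
    have hFspec : ∀ i : Fin (k.choose 2 + 1), i ≠ p0 → P (Sum.inr (F i)) = i := by
      intro i hi
      have hch : P (hsurj i).choose = i := (hsurj i).choose_spec
      rcases hch' : (hsurj i).choose with x | e
      · rw [hch'] at hch; rw [hall x] at hch; exact absurd hch.symm hi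
      · rw [hF]; simp only [hch', Sum.elim_inr, id]
        rw [hch'] at hch; exact hch
    calc k.choose 2 = (Finset.univ.erase p0 : Finset (Fin (k.choose 2 + 1))).card := by
          rw [Finset.card_erase_of_mem (Finset.mem_univ _), Finset.card_univ,
            Fintype.card_fin]
          omega
      _ ≤ E'.card := by
          apply Finset.card_le_card_of_injOn F
          · intro i hi
            have hine : i ≠ p0 := Finset.ne_of_mem_erase hi
            rw [Finset.mem_coe, hE', Finset.mem_filter]
            exact ⟨Finset.mem_univ _, by rw [hFspec i hine]; exact hine⟩
          · intro i hi j hj hij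
            have := hFspec i (Finset.ne_of_mem_erase hi)
            have hj' := hFspec j (Finset.ne_of_mem_erase hj)
            rw [← this, ← hj', hij]
  -- Step F: injection from E' into pairs of S
  have hmaps2 : ∀ e ∈ E', pairFinset (e : Sym2 V) ∈ S.powersetCard 2 := by
    intro e he
    rw [hE', Finset.mem_filter] at he
    rw [Finset.mem_powersetCard]
    constructor
    · intro x hx
      exact hend e he.2 x (mem_pairFinset.mp hx)
    · obtain ⟨⟨a, b⟩, hab⟩ := Quot.exists_rep (e : Sym2 V)
      have heq : (e : Sym2 V) = s(a, b) := hab.symm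
      have hadj : G.Adj a b := G.mem_edgeSet.mp (heq ▸ e.prop)
      rw [heq, pairFinset_mk]
      exact Finset.card_pair hadj.ne
  have hinj2 : Set.InjOn (fun e : G.edgeSet => pairFinset (e : Sym2 V)) E' := by
    intro e _ e' _ h
    exact Subtype.ext (pairFinset_inj h)
  have hcount2 : E'.card ≤ (S.powersetCard 2).card :=
    Finset.card_le_card_of_injOn _ hmaps2 hinj2
  have hpows : (S.powersetCard 2).card = S.card.choose 2 := Finset.card_powersetCard 2 S
  -- Step G: conclude S.card = k
  have hSk : S.card = k := by
    by_contra hne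
    have hlt : S.card < k := lt_of_le_of_ne hScard hne
    have hlt2 : S.card.choose 2 < k.choose 2 := choose_two_lt h2 hlt
    have hge : k.choose 2 ≤ S.card.choose 2 := hpows ▸ (le_trans hE'card hcount2)
    omega
  refine ⟨S, G.isNClique_iff.mpr ⟨?_, hSk⟩⟩
  -- surjectivity onto pairs of S
  rw [SimpleGraph.isClique_iff]
  intro x hx y hy hxy
  have hpair : ({x, y} : Finset V) ∈ S.powersetCard 2 := by
    rw [Finset.mem_powersetCard]
    refine ⟨?_, Finset.card_pair hxy⟩
    intro z hz
    rcases Finset.mem_insert.mp hz with rfl | hz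
    · exact hx
    · exact (Finset.mem_singleton.mp hz) ▸ hy
  have hle : (S.powersetCard 2).card ≤ E'.card := by rw [hpows, hSk]; exact hE'card
  obtain ⟨e, he, heq⟩ := Finset.surj_on_of_inj_on_of_card_le
    (fun e _ => pairFinset ((e : G.edgeSet) : Sym2 V)) (fun e he => hmaps2 e he)
    (fun e e' he he' h => hinj2 he he' h) hle {x, y} hpair
  have : (e : Sym2 V) = s(x, y) := by
    apply pairFinset_inj
    rw [pairFinset_mk, heq]
  exact G.mem_edgeSet.mp (this ▸ e.prop)


open HedgeGraph in
/-- `G` has a clique of size `k` iff the reduction hedge graph admits a hedge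
`h`-cut-set of size at most `ℓ = k`, where `h = C(k,2) + 1`. -/
theorem clique_iff_small_hedge_cut {V : Type*} [Fintype V] [DecidableEq V]
    (G : SimpleGraph V) [DecidableRel G.Adj] (n k : ℕ)
    (hn : Fintype.card V = n) (hk : 1 ≤ k) (hnk : 2 * k + 1 ≤ n) :
    (∃ s : Finset V, G.IsNClique k s) ↔
      ∃ C : Set (V ⊕ {t : Finset V // t.card = 2}),
        (reductionHedgeGraph G).IsCutSetOf (k.choose 2 + 1) C ∧ C.ncard ≤ k := by
  constructor
  · rintro ⟨s, hs⟩
    exact forward_aux G n k hn hk hnk s hs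
  · rintro ⟨C, ⟨P, hsurj, hC⟩, hcard⟩
    exact backward_aux G n k hn hk hnk C P hsurj hC hcard
end

section
/- In the reduction hedge graph G' from a graph G on n ≥ 2k+1 vertices (as in the W[1]-hardness proof), in any hedge h-cut (V_1,...,V_h) whose cut-set has size at most k, all original vertices V(G) lie in the same part. That is, if some part contains p original vertices with 1 ≤ p < n, then the cut-set contains at least p(n-p) ≥ n-1 > k pairwise-hedges, a contradiction. -/
open HedgeGraph in
/-- In any hedge `h`-cut of the reduction graph (with `h = C(k,2) + 1`) whose
cut-set has size at most `k`, all original vertices of `G` lie in the same part. -/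
theorem original_vertices_in_same_part {V : Type*} [Fintype V] [DecidableEq V]
    (G : SimpleGraph V) [DecidableRel G.Adj] (n k : ℕ)
    (hn : Fintype.card V = n) (hk : 1 ≤ k) (hnk : 2 * k + 1 ≤ n)
    (P : (V ⊕ G.edgeSet) → Fin (k.choose 2 + 1)) (hP : Function.Surjective P)
    (hcut : ((reductionHedgeGraph G).cutSet P).ncard ≤ k) :
    ∀ x y : V, P (Sum.inl x) = P (Sum.inl y) := by
  by_contra hcon
  push_neg at hcon
  obtain ⟨x, y, hxy⟩ := hcon
  classical
  set S : Finset V := Finset.univ.filter (fun v => P (Sum.inl v) = P (Sum.inl x)) with hS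
  have hxS : x ∈ S := by simp [hS]
  have hyS : y ∈ Sᶜ := by simp [hS]; exact fun h => hxy h.symm
  -- map each cross pair to a cut hedge
  have key : ∀ u ∈ S, ∀ w ∈ Sᶜ, u ≠ w := by
    intro u hu w hw h
    subst h
    simp [hS] at hu hw
    exact hw hu
  set g : V × V → (V ⊕ {t : Finset V // t.card = 2}) := fun p =>
    if h : p.1 ≠ p.2 then Sum.inr ⟨{p.1, p.2}, by
      rw [Finset.card_insert_of_notMem (by simpa using h)]; simp⟩
    else Sum.inl p.1 with hg
  have hsub : g '' ↑(S ×ˢ Sᶜ) ⊆ (reductionHedgeGraph G).cutSet P := by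
    rintro e ⟨⟨u, w⟩, hp, rfl⟩
    simp only [Finset.coe_product, Set.mem_prod, Finset.mem_coe] at hp
    have huw : u ≠ w := key u hp.1 w hp.2
    have hgeq : g (u, w) = Sum.inr ⟨{u, w}, _⟩ := dif_pos huw
    rw [hgeq]
    refine ⟨({u, w} : Finset V).image Sum.inl, by simp [reductionHedgeGraph],
      Sum.inl u, ?_, Sum.inl w, ?_, ?_⟩
    · simp
    · simp
    · have h1 : P (Sum.inl u) = P (Sum.inl x) := by
        have := hp.1; simp [hS] at this; exact this
      have h2 : P (Sum.inl w) ≠ P (Sum.inl x) := by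
        have := hp.2; simp [hS] at this; exact this
      rw [h1]; exact fun h => h2 h.symm
  have hinj : Set.InjOn g ↑(S ×ˢ Sᶜ) := by
    rintro ⟨u, w⟩ hp ⟨u', w'⟩ hp' heq
    simp only [Finset.coe_product, Set.mem_prod, Finset.mem_coe] at hp hp'
    have huw : u ≠ w := key u hp.1 w hp.2
    have huw' : u' ≠ w' := key u' hp'.1 w' hp'.2
    rw [hg] at heq
    simp only [dif_pos huw, dif_pos huw'] at heq
    have hset : ({u, w} : Finset V) = {u', w'} := by
      have := Sum.inr.inj heq
      exact congrArg Subtype.val this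
    have hu : u = u' := by
      have : u ∈ ({u', w'} : Finset V) := by rw [← hset]; simp
      simp at this
      rcases this with h | h
      · exact h
      · exact absurd h (key u hp.1 w' hp'.2)
    have hw : w = w' := by
      have : w ∈ ({u', w'} : Finset V) := by rw [← hset]; simp
      simp at this
      rcases this with h | h
      · exact absurd h.symm (key u' hp'.1 w hp.2)
      · exact h
    simp [hu, hw]
  have hfin : ((reductionHedgeGraph G).cutSet P).Finite := Set.toFinite _
  have hcard : (S ×ˢ Sᶜ).card ≤ ((reductionHedgeGraph G).cutSet P).ncard := by
    calc (S ×ˢ Sᶜ).card = (↑(S ×ˢ Sᶜ) : Set (V × V)).ncard := (Set.ncard_coe_finset _).symm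
    _ = (g '' ↑(S ×ˢ Sᶜ)).ncard := (Set.ncard_image_of_injOn hinj).symm
    _ ≤ _ := Set.ncard_le_ncard hsub hfin
  rw [Finset.card_product] at hcard
  have hScard : 1 ≤ S.card := Finset.card_pos.mpr ⟨x, hxS⟩
  have hSccard : 1 ≤ Sᶜ.card := Finset.card_pos.mpr ⟨y, hyS⟩
  have hsum : S.card + Sᶜ.card = n := by
    rw [Finset.card_add_card_compl, hn]
  obtain ⟨a, ha⟩ := Nat.exists_eq_add_of_le hScard
  obtain ⟨b, hb⟩ := Nat.exists_eq_add_of_le hSccard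
  rw [ha, hb] at hcard hsum
  have : k < (1 + a) * (1 + b) := by nlinarith
  omega
end
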